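/- arXiv:1810.02206 — 6 statements merged into one kernel-verified Lean document; each statement's English description precedes it below -/
import Mathlib

section
/- If the roots z1, z2, z3 of the cubic polynomial z³ + g₂z + g₃ are distinct, then j(z1,z2,z3,∞) = -4g₂³/Δ, where Δ = -4g₂³ - 27g₃² is the discriminant. -/
/-- If the roots `z1, z2, z3` of `z³ + g₂ z + g₃` are distinct, then
`j(z1,z2,z3,∞) = -4 g₂³ / Δ` where `Δ = -4g₂³ - 27g₃²`. -/
theorem jInvariant_roots_eq (z1 z2 z3 g2 g3 : ℂ)
    (h12 : z1 ≠ z2) (h13 : z1 ≠ z3) (h23 : z2 ≠ z3)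
    (hroots : ∀ z : ℂ, z ^ 3 + g2 * z + g3 = (z - z1) * (z - z2) * (z - z3)) :
    (4 * (((z1 - z3) / (z2 - z3)) ^ 2 - (z1 - z3) / (z2 - z3) + 1) ^ 3) /
      (27 * ((z1 - z3) / (z2 - z3)) ^ 2 * ((z1 - z3) / (z2 - z3) - 1) ^ 2) =
      -4 * g2 ^ 3 / (-4 * g2 ^ 3 - 27 * g3 ^ 2) := by
  have he2 : g2 = z1 * z2 + z1 * z3 + z2 * z3 := by
    linear_combination (hroots 1 - hroots (-1)) / 2
  have he3 : g3 = -(z1 * z2 * z3) := by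
    linear_combination hroots 0
  have he1 : z3 = -z1 - z2 := by
    linear_combination (hroots 1 + hroots (-1)) / 2 - hroots 0
  subst he2 he3 he1
  have d12 : z1 - z2 ≠ 0 := sub_ne_zero.mpr h12
  have d13 : z1 - (-z1 - z2) ≠ 0 := sub_ne_zero.mpr h13
  have d23 : z2 - (-z1 - z2) ≠ 0 := sub_ne_zero.mpr h23
  have hΔ : -4 * (z1 * z2 + z1 * (-z1 - z2) + z2 * (-z1 - z2)) ^ 3 -
      27 * (-(z1 * z2 * (-z1 - z2))) ^ 2 ≠ 0 := by
    have h : -4 * (z1 * z2 + z1 * (-z1 - z2) + z2 * (-z1 - z2)) ^ 3 -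
        27 * (-(z1 * z2 * (-z1 - z2))) ^ 2 =
        ((z1 - z2) * (z1 - (-z1 - z2)) * (z2 - (-z1 - z2))) ^ 2 := by ring
    rw [h]
    exact pow_ne_zero _ (mul_ne_zero (mul_ne_zero d12 d13) d23)
  have hlam : (z1 - (-z1 - z2)) / (z2 - (-z1 - z2)) ≠ 0 := div_ne_zero d13 d23
  have hlam1 : (z1 - (-z1 - z2)) / (z2 - (-z1 - z2)) - 1 ≠ 0 := by
    rw [div_sub_one d23]
    apply div_ne_zero _ d23
    intro h
    exact h12 (by linear_combination h)
  have hD1 : 27 * ((z1 - (-z1 - z2)) / (z2 - (-z1 - z2))) ^ 2 *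
      ((z1 - (-z1 - z2)) / (z2 - (-z1 - z2)) - 1) ^ 2 ≠ 0 := by
    exact mul_ne_zero (mul_ne_zero (by norm_num) (pow_ne_zero _ hlam)) (pow_ne_zero _ hlam1)
  rw [div_eq_div_iff hD1 hΔ]
  field_simp
  ring
end

section
/- A set {z1, z2, z3} of distinct roots of a polynomial z³ + g₂z + g₃ admits a nontrivial symmetry by an affine map z ↦ az + b (a ≠ 0) permuting the roots nontrivially if and only if its j-invariant equals 0 (in which case there is a symmetry of order 3) or 1 (in which case there is a symmetry of order 2). -/
/-- The set of distinct roots of `z³ + g₂z + g₃` admits a nontrivial symmetry by an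
affine map `z ↦ az + b` iff its `j`-invariant is `0` (order 3 symmetry) or `1`
(order 2 symmetry). -/
theorem symmetry_iff_jInvariant (z : Fin 3 → ℂ) (hz : Function.Injective z)
    (hsum : z 0 + z 1 + z 2 = 0) :
    let g2 : ℂ := z 0 * z 1 + z 0 * z 2 + z 1 * z 2
    let g3 : ℂ := -(z 0 * z 1 * z 2)
    let j : ℂ := -4 * g2 ^ 3 / (-4 * g2 ^ 3 - 27 * g3 ^ 2)
    ((∃ (a b : ℂ) (σ : Equiv.Perm (Fin 3)), a ≠ 0 ∧ σ ≠ 1 ∧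
        ∀ i, a * z i + b = z (σ i)) ↔ (j = 0 ∨ j = 1)) ∧
    (j = 0 → ∃ (a b : ℂ) (σ : Equiv.Perm (Fin 3)), a ≠ 0 ∧ orderOf σ = 3 ∧
        ∀ i, a * z i + b = z (σ i)) ∧
    (j = 1 → ∃ (a b : ℂ) (σ : Equiv.Perm (Fin 3)), a ≠ 0 ∧ orderOf σ = 2 ∧
        ∀ i, a * z i + b = z (σ i)) := by
  intro g2 g3 j
  have hg2 : g2 = z 0 * z 1 + z 0 * z 2 + z 1 * z 2 := rfl
  have hg3 : g3 = -(z 0 * z 1 * z 2) := rfl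
  have hj : j = -4 * g2 ^ 3 / (-4 * g2 ^ 3 - 27 * g3 ^ 2) := rfl
  have h01 : z 0 ≠ z 1 := fun h => absurd (hz h) (by decide)
  have h02 : z 0 ≠ z 2 := fun h => absurd (hz h) (by decide)
  have h12 : z 1 ≠ z 2 := fun h => absurd (hz h) (by decide)
  have h2 : z 2 = -(z 0 + z 1) := by linear_combination hsum
  -- discriminant nonzero
  have hd : -4 * g2 ^ 3 - 27 * g3 ^ 2 = ((z 0 - z 1) * (z 0 - z 2) * (z 1 - z 2)) ^ 2 := by
    rw [hg2, hg3, h2]; ring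
  have hdne : -4 * g2 ^ 3 - 27 * g3 ^ 2 ≠ 0 := by
    rw [hd]
    exact pow_ne_zero _ (mul_ne_zero (mul_ne_zero (sub_ne_zero.2 h01) (sub_ne_zero.2 h02))
      (sub_ne_zero.2 h12))
  -- order 3 symmetry when g2 = 0
  have key0 : g2 = 0 → ∃ (a b : ℂ) (σ : Equiv.Perm (Fin 3)), a ≠ 0 ∧ orderOf σ = 3 ∧
      ∀ i, a * z i + b = z (σ i) := by
    intro hg
    rw [hg2, h2] at hg
    have hq : z 0 ^ 2 + z 0 * z 1 + z 1 ^ 2 = 0 := by linear_combination -hg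
    have hz0 : z 0 ≠ 0 := by
      intro h0
      have h1 : z 1 ^ 2 = 0 := by linear_combination hq - (z 0 + z 1) * h0
      exact h01 (h0.trans ((pow_eq_zero_iff (two_ne_zero)).1 h1).symm)
    have hz1 : z 1 ≠ 0 := by
      intro h1
      have h0 : z 0 ^ 2 = 0 := by linear_combination hq - (z 1 + z 0) * h1
      exact h01 (((pow_eq_zero_iff (two_ne_zero)).1 h0).trans h1.symm)
    refine ⟨z 1 / z 0, 0, Equiv.swap 0 1 * Equiv.swap 1 2, div_ne_zero hz1 hz0, ?_, ?_⟩
    · haveI : Fact (Nat.Prime 3) := ⟨by norm_num⟩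
      exact orderOf_eq_prime (by decide) (by decide)
    · intro i
      fin_cases i
      · show z 1 / z 0 * z 0 + 0 = z 1
        rw [div_mul_cancel₀ _ hz0, add_zero]
      · show z 1 / z 0 * z 1 + 0 = z 2
        rw [add_zero, div_mul_eq_mul_div, div_eq_iff hz0, h2]
        linear_combination hq
      · show z 1 / z 0 * z 2 + 0 = z 0
        rw [add_zero, div_mul_eq_mul_div, div_eq_iff hz0, h2]
        linear_combination -hq
  -- order 2 symmetry when g3 = 0
  have key1 : g3 = 0 → ∃ (a b : ℂ) (σ : Equiv.Perm (Fin 3)), a ≠ 0 ∧ orderOf σ = 2 ∧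
      ∀ i, a * z i + b = z (σ i) := by
    intro hg
    rw [hg3, neg_eq_zero] at hg
    haveI : Fact (Nat.Prime 2) := ⟨by norm_num⟩
    rcases mul_eq_zero.1 hg with hg' | h'
    · rcases mul_eq_zero.1 hg' with h' | h'
      · refine ⟨-1, 0, Equiv.swap 1 2, by norm_num,
          orderOf_eq_prime (by decide) (by decide), ?_⟩
        intro i; fin_cases i
        · show -1 * z 0 + 0 = z 0; rw [h']; ring
        · show -1 * z 1 + 0 = z 2; linear_combination -hsum + h'
        · show -1 * z 2 + 0 = z 1; linear_combination -hsum + h'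
      · refine ⟨-1, 0, Equiv.swap 0 2, by norm_num,
          orderOf_eq_prime (by decide) (by decide), ?_⟩
        intro i; fin_cases i
        · show -1 * z 0 + 0 = z 2; linear_combination -hsum + h'
        · show -1 * z 1 + 0 = z 1; rw [h']; ring
        · show -1 * z 2 + 0 = z 0; linear_combination -hsum + h'
    · refine ⟨-1, 0, Equiv.swap 0 1, by norm_num,
        orderOf_eq_prime (by decide) (by decide), ?_⟩
      intro i; fin_cases i
      · show -1 * z 0 + 0 = z 1; linear_combination -hsum + h'
      · show -1 * z 1 + 0 = z 0; linear_combination -hsum + h'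
      · show -1 * z 2 + 0 = z 2; rw [h']; ring
  -- forward direction: symmetry implies g2 = 0 or g3 = 0
  have fwd : (∃ (a b : ℂ) (σ : Equiv.Perm (Fin 3)), a ≠ 0 ∧ σ ≠ 1 ∧
      ∀ i, a * z i + b = z (σ i)) → g2 = 0 ∨ g3 = 0 := by
    rintro ⟨a, b, σ, ha, hσ, h⟩
    have hsum' : z (σ 0) + z (σ 1) + z (σ 2) = 0 := by
      have := Equiv.sum_comp σ z
      rw [Fin.sum_univ_three, Fin.sum_univ_three] at this
      rw [this]; exact hsum
    have hb : b = 0 := by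
      linear_combination (1/3 : ℂ) * (h 0 + h 1 + h 2) - (a/3) * hsum + (1/3) * hsum'
    have hzσ : ∀ i, z (σ i) = a * z i := by
      intro i; rw [← h i, hb, add_zero]
    have hsq : z (σ 0) ^ 2 + z (σ 1) ^ 2 + z (σ 2) ^ 2 = z 0 ^ 2 + z 1 ^ 2 + z 2 ^ 2 := by
      have := Equiv.sum_comp σ (fun i => z i ^ 2)
      rw [Fin.sum_univ_three, Fin.sum_univ_three] at this
      exact this
    rw [hzσ 0, hzσ 1, hzσ 2] at hsq
    have hp : z (σ 0) * z (σ 1) * z (σ 2) = z 0 * z 1 * z 2 := by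
      have := Equiv.prod_comp σ z
      rw [Fin.prod_univ_three, Fin.prod_univ_three] at this
      exact this
    rw [hzσ 0, hzσ 1, hzσ 2] at hp
    have hS : z 0 ^ 2 + z 1 ^ 2 + z 2 ^ 2 = -2 * g2 := by
      rw [hg2]; linear_combination (z 0 + z 1 + z 2) * hsum
    have e2 : (a ^ 2 - 1) * g2 = 0 := by
      linear_combination (-1/2 : ℂ) * hsq + ((a^2 - 1)/2) * hS
    have e3 : (a ^ 3 - 1) * g3 = 0 := by
      rw [hg3]; linear_combination -hp
    have ha1 : a ≠ 1 := by
      intro h1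
      apply hσ
      exact Equiv.ext fun i => hz (by rw [hzσ i, h1, one_mul]; rfl)
    by_cases hG : g2 = 0
    · exact Or.inl hG
    · right
      have hane : a = -1 := by
        rcases mul_eq_zero.1 e2 with h' | h'
        · have hfac : (a - 1) * (a + 1) = 0 := by linear_combination h'
          rcases mul_eq_zero.1 hfac with h'' | h''
          · exact absurd (by linear_combination h'') ha1
          · linear_combination h''
        · exact absurd h' hG
      rcases mul_eq_zero.1 e3 with h' | h'
      · rw [hane] at h'; norm_num at h'
      · exact h'
  -- j computations
  have hj0 : g2 = 0 → j = 0 := by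
    intro hG; rw [hj, hG]; simp
  have hj1 : g3 = 0 → j = 1 := by
    intro hG
    have hne : -4 * g2 ^ 3 ≠ 0 := by
      intro h; apply hdne; rw [hG]; linear_combination h
    rw [hj, hG]
    rw [show -4 * g2 ^ 3 - 27 * (0:ℂ) ^ 2 = -4 * g2 ^ 3 by ring]
    exact div_self hne
  have hj0' : j = 0 → g2 = 0 := by
    intro hJ
    rw [hj, div_eq_zero_iff] at hJ
    rcases hJ with h' | h'
    · have : g2 ^ 3 = 0 := by linear_combination (-1/4 : ℂ) * h'
      exact (pow_eq_zero_iff (by norm_num)).1 this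
    · exact absurd h' hdne
  have hj1' : j = 1 → g3 = 0 := by
    intro hJ
    rw [hj, div_eq_one_iff_eq hdne] at hJ
    have : g3 ^ 2 = 0 := by linear_combination (1/27 : ℂ) * hJ
    exact (pow_eq_zero_iff (by norm_num)).1 this
  refine ⟨⟨fun h => ?_, fun h => ?_⟩, fun h => key0 (hj0' h), fun h => key1 (hj1' h)⟩
  · rcases fwd h with h' | h'
    · exact Or.inl (hj0 h')
    · exact Or.inr (hj1 h')
  · rcases h with h' | h'
    · obtain ⟨a, b, σ, ha, hord, hh⟩ := key0 (hj0' h')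
      refine ⟨a, b, σ, ha, fun h1 => ?_, hh⟩
      rw [h1, orderOf_one] at hord; norm_num at hord
    · obtain ⟨a, b, σ, ha, hord, hh⟩ := key1 (hj1' h')
      refine ⟨a, b, σ, ha, fun h1 => ?_, hh⟩
      rw [h1, orderOf_one] at hord; norm_num at hord
end

section
/- Three distinct complex numbers z1, z2, z3 with z1+z2+z3=0 which are not collinear and form an isosceles triangle have real j-invariant j(z1,z2,z3) < 1; the value j = 0 is attained exactly when the triangle is equilateral. -/
open Complex in
private lemma jInvariant_key (a b : ℂ) (ha : a ≠ 0) (hb : b ≠ 0) (hab : a + b ≠ 0)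
    (he : a - b ≠ 0) (hf : 2*a + b ≠ 0) (hd : a + 2*b ≠ 0)
    (hiso : ‖a - b‖ = ‖2*a + b‖) :
    ∃ r : ℝ, 0 < r ∧
      -4 * (-(a^2 + a*b + b^2)) ^ 3 /
          (-4 * (-(a^2 + a*b + b^2)) ^ 3 - 27 * (a*b*(a+b)) ^ 2) = 1 - (r : ℂ) ∧
      ((1 - (r : ℂ) = 0) ↔
        (‖a - b‖ = ‖a + 2*b‖ ∧
         ‖a + 2*b‖ = ‖2*a + b‖)) := by
  set A := starRingEnd ℂ a with hA
  set B := starRingEnd ℂ b with hB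
  have hstar : a*A + a*B + A*b = 0 := by
    have h1 : normSq (a-b) = normSq (2*a+b) := by
      rw [← Complex.sq_norm, ← Complex.sq_norm, hiso]
    have h2 : (a-b) * starRingEnd ℂ (a-b) = (2*a+b) * starRingEnd ℂ (2*a+b) := by
      rw [Complex.mul_conj, Complex.mul_conj]; exact_mod_cast h1
    simp only [map_sub, map_add, map_mul, map_ofNat] at h2
    simp only [← hA, ← hB] at h2
    linear_combination (-1/3 : ℂ) * h2
  have hEpos : 0 < normSq (a-b) := normSq_pos.2 he
  have hDpos : 0 < normSq (a+2*b) := normSq_pos.2 hd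
  have hNpos : 0 < normSq (a*b*(a+b)) :=
    normSq_pos.2 (mul_ne_zero (mul_ne_zero ha hb) hab)
  set r : ℝ := 27 * normSq (a*b*(a+b)) / (normSq (a-b)^2 * normSq (a+2*b)) with hr
  have hden : (0:ℝ) < normSq (a-b)^2 * normSq (a+2*b) :=
    mul_pos (pow_pos hEpos 2) hDpos
  have hrpos : 0 < r := by
    rw [hr]; exact div_pos (by linarith) hden
  -- normSq expansions
  have hE2 : normSq (a - b) = 2 * normSq a + normSq b := by
    have h : ((normSq (a-b) : ℂ)) = ((2 * normSq a + normSq b : ℝ) : ℂ) := by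
      push_cast
      rw [← Complex.mul_conj, ← Complex.mul_conj, ← Complex.mul_conj]
      simp only [map_sub]
      simp only [← hA, ← hB]
      linear_combination -hstar
    exact_mod_cast h
  have hD2 : normSq (a + 2*b) = 4 * normSq b - normSq a := by
    have h : ((normSq (a+2*b) : ℂ)) = ((4 * normSq b - normSq a : ℝ) : ℂ) := by
      push_cast
      rw [← Complex.mul_conj, ← Complex.mul_conj, ← Complex.mul_conj]
      simp only [map_add, map_mul, map_ofNat]
      simp only [← hA, ← hB]
      linear_combination (2:ℂ) * hstar
    exact_mod_cast h
  have hN2 : normSq (a*b*(a+b)) = normSq a * normSq b^2 := by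
    have h : ((normSq (a*b*(a+b)) : ℂ)) = ((normSq a * normSq b^2 : ℝ) : ℂ) := by
      push_cast
      rw [← Complex.mul_conj, ← Complex.mul_conj, ← Complex.mul_conj]
      simp only [map_add, map_mul]
      simp only [← hA, ← hB]
      linear_combination (a*A*b*B) * hstar
    exact_mod_cast h
  refine ⟨r, hrpos, ?_, ?_⟩
  · -- the j = 1 - r identity
    have hΔne : -4 * (-(a^2 + a*b + b^2)) ^ 3 - 27 * (a*b*(a+b)) ^ 2 ≠ 0 := by
      have : -4 * (-(a^2 + a*b + b^2)) ^ 3 - 27 * (a*b*(a+b)) ^ 2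
          = ((a-b)*(2*a+b)*(a+2*b))^2 := by ring
      rw [this]
      exact pow_ne_zero _ (mul_ne_zero (mul_ne_zero he hf) hd)
    rw [div_eq_iff hΔne]
    have hconjne : (((a-b) * starRingEnd ℂ (a-b))^2 * ((a+2*b) * starRingEnd ℂ (a+2*b))) ≠ 0 := by
      apply mul_ne_zero (pow_ne_zero _ (mul_ne_zero he ?_)) (mul_ne_zero hd ?_)
      · rw [starRingEnd_apply]; exact star_ne_zero.2 he
      · rw [starRingEnd_apply]; exact star_ne_zero.2 hd
    have hcast : (r : ℂ) = 27 * ((a*b*(a+b)) * starRingEnd ℂ (a*b*(a+b))) /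
        (((a-b) * starRingEnd ℂ (a-b))^2 * ((a+2*b) * starRingEnd ℂ (a+2*b))) := by
      rw [Complex.mul_conj, Complex.mul_conj, Complex.mul_conj, hr]
      push_cast
      ring
    have hkey : (r : ℂ) * (((a-b)*(2*a+b)*(a+2*b))^2) = -27 * (a*b*(a+b))^2 := by
      rw [hcast, div_mul_eq_mul_div, div_eq_iff hconjne]
      simp only [map_mul, map_add, map_sub, map_ofNat]
      simp only [← hA, ← hB]
      linear_combination ((108)*a*b^7*(B)^2 + (108)*a*b^7*(A)*(B) + (54)*a^2*b^6*(B)^2 + (324)*a^2*b^6*(A)*(B) + (54)*a^2*b^6*(A)^2 + (-216)*a^3*b^5*(B)^2 + (-135)*a^3*b^5*(A)*(B) + (-27)*a^3*b^5*(A)^2 + (-108)*a^4*b^4*(B)^2 + (-621)*a^4*b^4*(A)*(B) + (-81)*a^4*b^4*(A)^2 + (108)*a^5*b^3*(B)^2 + (-81)*a^5*b^3*(A)*(B) + (27)*a^5*b^3*(A)^2 + (54)*a^6*b^2*(B)^2 + (297)*a^6*b^2*(A)*(B) + (27)*a^6*b^2*(A)^2 + (108)*a^7*b*(A)*(B)) *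 hstar
    linear_combination hkey
  · -- the iff
    rw [sub_eq_zero, eq_comm, Complex.ofReal_eq_one]
    have hr1 : r = 1 ↔ normSq a = normSq b := by
      rw [hr, div_eq_one_iff_eq (ne_of_gt hden)]
      rw [hN2, hE2, hD2]
      constructor
      · intro h
        have h3 : (normSq a - normSq b)^3 = 0 := by linear_combination (1/4 : ℝ) * h
        have := pow_eq_zero_iff (n := 3) (by norm_num) |>.1 h3
        linarith [this]
      · intro h; rw [h]; ring
    have habs : normSq a = normSq b ↔
        ‖a - b‖ = ‖a + 2*b‖ := by
      constructor
      · intro h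
        rw [Complex.norm_def, Complex.norm_def, hE2, hD2, h]
        congr 1; ring
      · intro h
        have h2 : (‖a-b‖)^2 = (‖a+2*b‖)^2 := by rw [h]
        rw [Complex.sq_norm, Complex.sq_norm, hE2, hD2] at h2
        linarith
    rw [hr1, habs]
    constructor
    · intro h
      exact ⟨h, h.symm.trans hiso⟩
    · rintro ⟨h1, _⟩
      exact h1

/-- Three distinct non-collinear complex numbers summing to zero forming an isosceles
triangle have real `j`-invariant `< 1`, with `j = 0` exactly for equilateral triangles. -/
theorem jInvariant_isosceles (z1 z2 z3 : ℂ)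
    (h12 : z1 ≠ z2) (h13 : z1 ≠ z3) (h23 : z2 ≠ z3)
    (hsum : z1 + z2 + z3 = 0)
    (hncol : ¬ Collinear ℝ ({z1, z2, z3} : Set ℂ))
    (hiso : ‖z1 - z2‖ = ‖z1 - z3‖ ∨
            ‖z2 - z1‖ = ‖z2 - z3‖ ∨
            ‖z3 - z1‖ = ‖z3 - z2‖) :
    let g2 : ℂ := z1 * z2 + z1 * z3 + z2 * z3
    let g3 : ℂ := -(z1 * z2 * z3)
    let j : ℂ := -4 * g2 ^ 3 / (-4 * g2 ^ 3 - 27 * g3 ^ 2)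
    j.im = 0 ∧ j.re < 1 ∧
      (j = 0 ↔ (‖z1 - z2‖ = ‖z2 - z3‖ ∧
                ‖z2 - z3‖ = ‖z3 - z1‖)) := by
  intro g2 g3 j
  have hg2 : g2 = z1 * z2 + z1 * z3 + z2 * z3 := rfl
  have hg3 : g3 = -(z1 * z2 * z3) := rfl
  have hj : j = -4 * g2 ^ 3 / (-4 * g2 ^ 3 - 27 * g3 ^ 2) := rfl
  -- none of the points is zero
  have hline : ∀ w : ℂ, Collinear ℝ ({0, w, -w} : Set ℂ) := by
    intro w
    rw [collinear_iff_exists_forall_eq_smul_vadd]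
    refine ⟨0, w, ?_⟩
    rintro p (rfl | rfl | rfl)
    · exact ⟨0, by simp⟩
    · exact ⟨1, by simp⟩
    · exact ⟨-1, by simp⟩
  have hz1 : z1 ≠ 0 := by
    intro h
    apply hncol
    have h3 : z3 = -z2 := by rw [h] at hsum; linear_combination hsum
    rw [h, h3]
    exact hline z2
  have hz2 : z2 ≠ 0 := by
    intro h
    apply hncol
    have h3 : z3 = -z1 := by rw [h] at hsum; linear_combination hsum
    rw [h, h3]
    have : ({z1, 0, -z1} : Set ℂ) = {0, z1, -z1} := by
      ext x; simp [or_comm, or_assoc, or_left_comm]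
    rw [this]
    exact hline z1
  have hz3 : z3 ≠ 0 := by
    intro h
    apply hncol
    have h3 : z2 = -z1 := by rw [h] at hsum; linear_combination hsum
    rw [h, h3]
    have : ({z1, -z1, 0} : Set ℂ) = {0, z1, -z1} := by
      ext x; simp [or_comm, or_assoc, or_left_comm]
    rw [this]
    exact hline z1
  rcases hiso with h | h | h
  · -- apex z1 : a = z1, b = z2
    have hz3' : z3 = -(z1 + z2) := by linear_combination hsum
    have hab : z1 + z2 ≠ 0 := by
      intro hh; exact hz3 (by rw [hz3', hh, neg_zero])
    have hfe : z1 - z3 = 2*z1 + z2 := by rw [hz3']; ring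
    have hde : z2 - z3 = z1 + 2*z2 := by rw [hz3']; ring
    rw [hfe] at h
    obtain ⟨r, hrpos, heq, hiff⟩ := jInvariant_key z1 z2 hz1 hz2 hab
      (sub_ne_zero.2 h12) (hfe ▸ sub_ne_zero.2 h13) (hde ▸ sub_ne_zero.2 h23) h
    have hJ : j = 1 - (r : ℂ) := by
      rw [hj, show g2 = -(z1^2 + z1*z2 + z2^2) from by rw [hg2, hz3']; ring,
        show g3 = z1*z2*(z1+z2) from by rw [hg3, hz3']; ring]
      exact heq
    refine ⟨by rw [hJ]; simp, by rw [hJ]; simp; linarith, ?_⟩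
    rw [hJ, hde, show ‖z3 - z1‖ = ‖2*z1 + z2‖ from by
      rw [show z3 - z1 = -(2*z1 + z2) from by rw [hz3']; ring, norm_neg]]
    exact hiff
  · -- apex z2 : a = z2, b = z1
    have hz3' : z3 = -(z2 + z1) := by linear_combination hsum
    have hab : z2 + z1 ≠ 0 := by
      intro hh; exact hz3 (by rw [hz3', hh, neg_zero])
    have hfe : z2 - z3 = 2*z2 + z1 := by rw [hz3']; ring
    have hde : ‖z3 - z1‖ = ‖z2 + 2*z1‖ := by
      rw [show z3 - z1 = -(z2 + 2*z1) from by rw [hz3']; ring, norm_neg]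
    rw [hfe] at h
    obtain ⟨r, hrpos, heq, hiff⟩ := jInvariant_key z2 z1 hz2 hz1 hab
      (sub_ne_zero.2 h12.symm) (hfe ▸ sub_ne_zero.2 h23)
      (by rw [show z2 + 2*z1 = -(z3 - z1) from by rw [hz3']; ring]
          exact neg_ne_zero.2 (sub_ne_zero.2 h13.symm)) h
    have hJ : j = 1 - (r : ℂ) := by
      rw [hj, show g2 = -(z2^2 + z2*z1 + z1^2) from by rw [hg2, hz3']; ring,
        show g3 = z2*z1*(z2+z1) from by rw [hg3, hz3']; ring]
      exact heq
    refine ⟨by rw [hJ]; simp, by rw [hJ]; simp; linarith, ?_⟩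
    rw [hJ, show ‖z1 - z2‖ = ‖z2 - z1‖ from norm_sub_rev z1 z2,
      hfe, hde]
    rw [hiff]
    constructor
    · rintro ⟨u, v⟩; exact ⟨u.trans v, v.symm⟩
    · rintro ⟨u, v⟩; exact ⟨u.trans v, v.symm⟩
  · -- apex z3 : a = z3, b = z1
    have hz2' : z2 = -(z3 + z1) := by linear_combination hsum
    have hab : z3 + z1 ≠ 0 := by
      intro hh; exact hz2 (by rw [hz2', hh, neg_zero])
    have hfe : z3 - z2 = 2*z3 + z1 := by rw [hz2']; ring
    have hde : z1 - z2 = z3 + 2*z1 := by rw [hz2']; ring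
    rw [hfe] at h
    obtain ⟨r, hrpos, heq, hiff⟩ := jInvariant_key z3 z1 hz3 hz1 hab
      (sub_ne_zero.2 h13.symm) (hfe ▸ sub_ne_zero.2 h23.symm) (hde ▸ sub_ne_zero.2 h12) h
    have hJ : j = 1 - (r : ℂ) := by
      rw [hj, show g2 = -(z3^2 + z3*z1 + z1^2) from by rw [hg2, hz2']; ring,
        show g3 = z3*z1*(z3+z1) from by rw [hg3, hz2']; ring]
      exact heq
    refine ⟨by rw [hJ]; simp, by rw [hJ]; simp; linarith, ?_⟩
    rw [hJ, hde, show ‖z2 - z3‖ = ‖2*z3 + z1‖ from by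
      rw [norm_sub_rev, hfe]]
    rw [hiff]
    constructor
    · rintro ⟨u, v⟩; exact ⟨v, h.symm⟩
    · rintro ⟨u, v⟩; exact ⟨h.trans u.symm, u⟩
end

section
/- Define operations on sequences (a_i)_{i=1}^{m} in {1,2}: η_∘ appends (1,2,1) if a_m = 1 and (2,1,2) if a_m = 2; η_× appends (2,1,2) if a_m = 1 and (1,2,1) if a_m = 2. Then for any sequence ω obtained from (1,2,1) by n-1 applications of operations η_∘ or η_×, each interleaved with arbitrary cyclic shifts, every maximal constant run of ω has length at most n. -/
/-- `η_∘`: append the triple matching the last entry. -/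
def etaO (a : List ℤ) : List ℤ :=
  a ++ (if a.getLast? = some 1 then [1, 2, 1] else [2, 1, 2])

/-- `η_×`: append the triple not matching the last entry. -/
def etaX (a : List ℤ) : List ℤ :=
  a ++ (if a.getLast? = some 1 then [2, 1, 2] else [1, 2, 1])

/-- The cyclic shift `σ` at stage `i`: a plain rotation for `i` even, and with the
wrapped entry complemented (`a₁ ↦ 3 - a₁`) for `i` odd. -/
def cshift (i : ℕ) (a : List ℤ) : List ℤ :=
  if i % 2 = 0 then a.rotate 1 else a.tail ++ [3 - a.headI]

/-- Sequences obtained from `(1,2,1)` by `n-1` applications of `η_∘`/`η_×`, each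
interleaved with arbitrary powers of the cyclic shift. -/
inductive Built : ℕ → List ℤ → Prop
  | base : Built 1 [1, 2, 1]
  | stepO {i : ℕ} {a : List ℤ} (k : ℕ) : Built i a → Built (i + 1) (etaO ((cshift i)^[k] a))
  | stepX {i : ℕ} {a : List ℤ} (k : ℕ) : Built i a → Built (i + 1) (etaX ((cshift i)^[k] a))

namespace RunAux

lemma cshift_length (p : ℕ) (b : List ℤ) (hb : b ≠ []) : (cshift p b).length = b.length := by
  have hpos : 0 < b.length := List.length_pos_iff.mpr hb
  unfold cshift
  split
  · exact List.length_rotate b 1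
  · simp [List.length_tail]; omega

lemma cshift_ne_nil (p : ℕ) (b : List ℤ) (hb : b ≠ []) : cshift p b ≠ [] := by
  have := cshift_length p b hb
  intro h; rw [h] at this; simp at this; exact hb (List.length_eq_zero_iff.mp this.symm)

lemma iterate_ne_nil (p j : ℕ) (b : List ℤ) (hb : b ≠ []) : (cshift p)^[j] b ≠ [] := by
  induction j with
  | zero => exact hb
  | succ j ih => rw [Function.iterate_succ_apply']; exact cshift_ne_nil p _ ih

lemma iterate_length (p j : ℕ) (b : List ℤ) (hb : b ≠ []) :
    ((cshift p)^[j] b).length = b.length := by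
  induction j with
  | zero => rfl
  | succ j ih =>
    rw [Function.iterate_succ_apply', cshift_length p _ (iterate_ne_nil p j b hb), ih]

lemma iterate_structure (p : ℕ) (b : List ℤ) :
    ∀ j, j ≤ b.length →
    (cshift p)^[j] b = b.drop j ++
      (if p % 2 = 0 then b.take j else (b.take j).map (fun x => 3 - x)) := by
  intro j
  induction j with
  | zero => intro _; simp
  | succ j ih =>
    intro hj
    have hj' : j < b.length := by omega
    have hdrop : b.drop j = b[j] :: b.drop (j + 1) := List.drop_eq_getElem_cons hj'
    have htake : b.take (j + 1) = b.take j ++ [b[j]] := by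
      rw [← List.take_concat_get hj', List.concat_eq_append]
    rw [Function.iterate_succ_apply', ih (le_of_lt hj')]
    unfold cshift
    split
    · rw [hdrop]
      simp only [List.cons_append, List.rotate_cons_succ, List.rotate_zero, htake]
      simp [List.append_assoc]
    · rw [hdrop]
      simp only [List.cons_append, List.tail_cons, List.headI_cons, htake,
        List.map_append, List.map_cons, List.map_nil, List.append_assoc]


/-- Value at position `j` of the (twisted) cyclic extension. -/
def F (p : ℕ) (b : List ℤ) (j : ℕ) : ℤ := ((cshift p)^[j] b).headI

lemma F_head (p : ℕ) (b : List ℤ) (j : ℕ) (hj : j < b.length) :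
    F p b j = b.getD j 0 := by
  unfold F
  rw [iterate_structure p b j (le_of_lt hj), List.drop_eq_getElem_cons hj]
  rw [List.cons_append, List.headI_cons, List.getD_eq_getElem b 0 hj]

lemma iterate_full (p : ℕ) (b : List ℤ) :
    (cshift p)^[b.length] b =
      if p % 2 = 0 then b else b.map (fun x => 3 - x) := by
  rw [iterate_structure p b b.length le_rfl]
  simp

lemma cshift_map (p : ℕ) (l : List ℤ) (hl : l ≠ []) :
    cshift p (l.map (fun x => 3 - x)) = (cshift p l).map (fun x => 3 - x) := by
  obtain ⟨x, xs, rfl⟩ := List.exists_cons_of_ne_nil hl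
  unfold cshift
  split
  · simp [List.rotate_cons_succ]
  · simp

lemma iterate_map (p : ℕ) : ∀ (j : ℕ) (l : List ℤ), l ≠ [] →
    (cshift p)^[j] (l.map (fun x => 3 - x)) = ((cshift p)^[j] l).map (fun x => 3 - x) := by
  intro j
  induction j with
  | zero => intro l _; rfl
  | succ j ih =>
    intro l hl
    rw [Function.iterate_succ_apply, Function.iterate_succ_apply,
      cshift_map p l hl, ih _ (cshift_ne_nil p l hl)]

lemma headI_map (l : List ℤ) (hl : l ≠ []) :
    (l.map (fun x => 3 - x)).headI = 3 - l.headI := by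
  obtain ⟨x, xs, rfl⟩ := List.exists_cons_of_ne_nil hl
  rfl

lemma F_periodic (p : ℕ) (b : List ℤ) (hb : b ≠ []) (j : ℕ) :
    F p b (j + b.length) = if p % 2 = 0 then F p b j else 3 - F p b j := by
  unfold F
  rw [Function.iterate_add_apply, iterate_full]
  split
  · rfl
  · rw [iterate_map p j b hb, headI_map _ (iterate_ne_nil p j b hb)]

lemma Br_periodic (p : ℕ) (b : List ℤ) (hb : b ≠ []) (k : ℕ) :
    (F p b (k + b.length) ≠ F p b (k + b.length + 1)) ↔ (F p b k ≠ F p b (k + 1)) := by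
  have h1 := F_periodic p b hb k
  have h2 := F_periodic p b hb (k + 1)
  have e : k + b.length + 1 = (k + 1) + b.length := by omega
  rw [e, h1, h2]
  split
  · tauto
  · constructor <;> (intro hne heq; exact hne (by omega))

lemma Br_periodic_mul (p : ℕ) (b : List ℤ) (hb : b ≠ []) (k : ℕ) : ∀ q : ℕ,
    (F p b (k + q * b.length) ≠ F p b (k + q * b.length + 1)) ↔ (F p b k ≠ F p b (k + 1)) := by
  intro q
  induction q with
  | zero => simp
  | succ q ih =>
    have e : k + (q + 1) * b.length = (k + q * b.length) + b.length := by ring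
    rw [e, Br_periodic p b hb, ih]


lemma built_facts {i : ℕ} {a : List ℤ} (h : Built i a) : 1 ≤ i ∧ a.length = 3 * i := by
  induction h with
  | base => exact ⟨le_rfl, rfl⟩
  | @stepO i a k h ih =>
    obtain ⟨h1, h2⟩ := ih
    have hne : a ≠ ([] : List ℤ) := by
      intro hnil; rw [hnil] at h2; simp at h2; omega
    have hlen := iterate_length i k a hne
    refine ⟨by omega, ?_⟩
    unfold etaO
    rw [List.length_append, hlen, h2]
    split <;> simp <;> ring
  | @stepX i a k h ih =>
    obtain ⟨h1, h2⟩ := ih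
    have hne : a ≠ ([] : List ℤ) := by
      intro hnil; rw [hnil] at h2; simp at h2; omega
    have hlen := iterate_length i k a hne
    refine ⟨by omega, ?_⟩
    unfold etaX
    rw [List.length_append, hlen, h2]
    split <;> simp <;> ring

/-- The run invariant: every window of `i` adjacent pairs contains a non-equal pair. -/
def Inv (i : ℕ) (b : List ℤ) : Prop :=
  ∀ k : ℕ, ∃ j : ℕ, j < i ∧ F i b (k + j) ≠ F i b (k + j + 1)

lemma base_inv : Inv 1 [1, 2, 1] := by
  intro k
  refine ⟨0, Nat.zero_lt_one, ?_⟩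
  simp only [Nat.add_zero]
  induction k using Nat.strong_induction_on with
  | _ k ih =>
    rcases Nat.lt_or_ge k 3 with hk | hk
    · interval_cases k <;> decide
    · have e : k = (k - 3) + 3 := by omega
      rw [e]
      have h3 : ([1, 2, 1] : List ℤ).length = 3 := rfl
      have := (h3 ▸ Br_periodic 1 [1, 2, 1] (by simp) (k - 3))
      exact fun hq => (this.mpr (ih (k - 3) (by omega))) hq


lemma step_inv (i : ℕ) (hi : 1 ≤ i) (b : List ℤ) (hlen : b.length = 3 * i)
    (c : ℤ) (hc : 2 * c ≠ 3) (hInv : Inv i b) : Inv (i + 1) (b ++ [c, 3 - c, c]) := by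
  set ω : List ℤ := b ++ [c, 3 - c, c] with hω
  have hbne : b ≠ [] := by intro h; rw [h] at hlen; simp at hlen; omega
  have hωlen : ω.length = 3 * i + 3 := by
    rw [hω, List.length_append, hlen]; rfl
  have hωne : ω ≠ [] := by
    intro h; rw [h] at hωlen; simp at hωlen
  -- values of the extension of ω in the first period
  have gval : ∀ r, r < 3 * i → F (i + 1) ω r = b.getD r 0 := by
    intro r hr
    rw [F_head (i + 1) ω r (by omega), hω, List.getD_append _ _ _ _ (by omega)]
  have gc0 : F (i + 1) ω (3 * i) = c := by
    rw [F_head (i + 1) ω _ (by omega), hω,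
      List.getD_append_right _ _ _ _ (by omega)]
    simp [hlen]
  have gc1 : F (i + 1) ω (3 * i + 1) = 3 - c := by
    rw [F_head (i + 1) ω _ (by omega), hω,
      List.getD_append_right _ _ _ _ (by omega)]
    have : 3 * i + 1 - b.length = 1 := by omega
    rw [this]; rfl
  have gc2 : F (i + 1) ω (3 * i + 2) = c := by
    rw [F_head (i + 1) ω _ (by omega), hω,
      List.getD_append_right _ _ _ _ (by omega)]
    have : 3 * i + 2 - b.length = 2 := by omega
    rw [this]; rfl
  -- interior breaks transfer from b
  have G3 : ∀ r, r + 2 ≤ 3 * i →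
      ((F (i + 1) ω r ≠ F (i + 1) ω (r + 1)) ↔ (F i b r ≠ F i b (r + 1))) := by
    intro r hr
    rw [gval r (by omega), gval (r + 1) (by omega),
      F_head i b r (by omega), F_head i b (r + 1) (by omega)]
  have hcc : c ≠ 3 - c := by omega
  intro k
  have hP : (0 : ℕ) < 3 * i + 3 := by omega
  have hk : k = k % (3 * i + 3) + (k / (3 * i + 3)) * (3 * i + 3) :=
    (Nat.mod_add_div' k (3 * i + 3)).symm
  set r := k % (3 * i + 3) with hrdef
  set q := k / (3 * i + 3) with hqdef
  have hr : r < 3 * i + 3 := Nat.mod_lt _ hP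
  suffices hsuf : ∃ j : ℕ, j < i + 1 ∧ F (i + 1) ω (r + j) ≠ F (i + 1) ω (r + j + 1) by
    obtain ⟨j, hj, hB⟩ := hsuf
    refine ⟨j, hj, ?_⟩
    have hper := Br_periodic_mul (i + 1) ω hωne (r + j) q
    rw [hωlen] at hper
    have e : k + j = r + j + q * (3 * i + 3) := by rw [hk]; ring
    rw [e]
    exact hper.mpr hB
  rcases (by omega : r + 1 ≤ 2 * i ∨ (2 * i ≤ r ∧ r ≤ 3 * i) ∨ r = 3 * i + 1 ∨ r = 3 * i + 2)
    with hA | hB | hC | hD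
  · obtain ⟨j, hj, hBb⟩ := hInv r
    exact ⟨j, by omega, (G3 (r + j) (by omega)).mpr hBb⟩
  · refine ⟨3 * i - r, by omega, ?_⟩
    have e : r + (3 * i - r) = 3 * i := by omega
    rw [e, gc0, gc1]
    exact hcc
  · refine ⟨0, by omega, ?_⟩
    rw [Nat.add_zero, hC, gc1]
    have e : 3 * i + 1 + 1 = 3 * i + 2 := by omega
    rw [e, gc2]
    omega
  · obtain ⟨j, hj, hBb⟩ := hInv 0
    rw [Nat.zero_add] at hBb
    refine ⟨j + 1, by omega, ?_⟩
    have hper := Br_periodic_mul (i + 1) ω hωne j 1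
    rw [hωlen] at hper
    have e : r + (j + 1) = j + 1 * (3 * i + 3) := by omega
    rw [e]
    exact hper.mpr ((G3 j (by omega)).mpr hBb)


lemma F_shift (p k0 j : ℕ) (b : List ℤ) : F p ((cshift p)^[k0] b) j = F p b (k0 + j) := by
  unfold F
  rw [Nat.add_comm, Function.iterate_add_apply]

lemma inv_shift (i k0 : ℕ) (b : List ℤ) (h : Inv i b) : Inv i ((cshift i)^[k0] b) := by
  intro k
  obtain ⟨j, hj, hB⟩ := h (k0 + k)
  refine ⟨j, hj, ?_⟩
  rw [F_shift, F_shift]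
  have e1 : k0 + (k + j) = k0 + k + j := by omega
  have e2 : k0 + (k + j + 1) = k0 + k + j + 1 := by omega
  rw [e1, e2]
  exact hB

lemma built_inv {i : ℕ} {a : List ℤ} (h : Built i a) : Inv i a := by
  induction h with
  | base => exact base_inv
  | @stepO i a k h ih =>
    obtain ⟨hi, hlen⟩ := built_facts h
    have hne : a ≠ [] := by intro hnil; rw [hnil] at hlen; simp at hlen; omega
    have hblen : ((cshift i)^[k] a).length = 3 * i := by rw [iterate_length i k a hne, hlen]
    have hInvb := inv_shift i k a ih
    unfold etaO
    split
    · exact step_inv i hi _ hblen 1 (by omega) hInvb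
    · have e : ([2, 1, 2] : List ℤ) = [2, 3 - 2, 2] := by norm_num
      rw [e]
      exact step_inv i hi _ hblen 2 (by omega) hInvb
  | @stepX i a k h ih =>
    obtain ⟨hi, hlen⟩ := built_facts h
    have hne : a ≠ [] := by intro hnil; rw [hnil] at hlen; simp at hlen; omega
    have hblen : ((cshift i)^[k] a).length = 3 * i := by rw [iterate_length i k a hne, hlen]
    have hInvb := inv_shift i k a ih
    unfold etaX
    split
    · have e : ([2, 1, 2] : List ℤ) = [2, 3 - 2, 2] := by norm_num
      rw [e]
      exact step_inv i hi _ hblen 2 (by omega) hInvb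
    · exact step_inv i hi _ hblen 1 (by omega) hInvb

end RunAux

open RunAux

/-- Every maximal constant run of a sequence built from `(1,2,1)` by `n-1` interleaved
shift-and-append operations has (cyclic) length at most `n`: there is no constant block
of `n+1` consecutive entries in the (twisted) cyclic sequence. -/
theorem built_run_le (n : ℕ) (ω : List ℤ) (h : Built n ω) :
    ∀ (k : ℕ) (v : ℤ), ((cshift n)^[k] ω).take (n + 1) ≠ List.replicate (n + 1) v := by
  intro k v hrep
  obtain ⟨hn, hlen⟩ := built_facts h
  have hne : ω ≠ [] := by intro hnil; rw [hnil] at hlen; simp at hlen; omega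
  have hitlen : ((cshift n)^[k] ω).length = 3 * n := by rw [iterate_length n k ω hne, hlen]
  have hval : ∀ j, j < n + 1 → F n ω (k + j) = v := by
    intro j hj
    have h1 : F n ((cshift n)^[k] ω) j = ((cshift n)^[k] ω).getD j 0 :=
      F_head n _ j (by omega)
    rw [F_shift] at h1
    rw [h1]
    have h2 : ((cshift n)^[k] ω).getD j 0 = (((cshift n)^[k] ω).take (n + 1)).getD j 0 := by
      rw [List.getD_eq_getElem?_getD, List.getD_eq_getElem?_getD, List.getElem?_take, if_pos hj]
    rw [h2, hrep, List.getD_eq_getElem?_getD, List.getElem?_replicate_of_lt hj]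
    rfl
  obtain ⟨j, hj, hB⟩ := built_inv h k
  have e : k + j + 1 = k + (j + 1) := by omega
  exact hB (by rw [hval j (by omega), e, hval (j + 1) (by omega)])
end

section
/- If f_{3n} = y³ + b x^{2n} y + c x^{3n} with b, c ∈ ℂ and f_{3n} squarefree (as a polynomial), then the partial derivatives f_{3n,x} = 2nb x^{2n-1}y + 3nc x^{3n-1} and f_{3n,y} = 3y² + b x^{2n} are coprime in ℂ[x,y]. -/
open MvPolynomial

private noncomputable def psi2 : MvPolynomial (Fin 2) ℂ →ₐ[ℂ] Polynomial ℂ :=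
  aeval ![(0 : Polynomial ℂ), Polynomial.X]

private lemma psi2_X0 : psi2 (X 0) = 0 := by simp [psi2]

private lemma psi2_X1 : psi2 (X 1) = Polynomial.X := by simp [psi2]

private lemma prime_X0 : Prime (X 0 : MvPolynomial (Fin 2) ℂ) := by
  have h := (MulEquiv.prime_iff (MvPolynomial.finSuccEquiv ℂ 1).toMulEquiv
    (p := (X 0 : MvPolynomial (Fin 2) ℂ))).symm
  rw [h]
  simpa [finSuccEquiv_X_zero] using (Polynomial.prime_X (R := MvPolynomial (Fin 1) ℂ))

/-- If `f₃ₙ = y³ + b x²ⁿ y + c x³ⁿ` is squarefree, then its partial derivatives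
`f₃ₙ,ₓ = 2nb x²ⁿ⁻¹y + 3nc x³ⁿ⁻¹` and `f₃ₙ,ᵧ = 3y² + b x²ⁿ` have no common nonunit
factor in `ℂ[x,y]`. -/
theorem pderivs_coprime (n : ℕ) (hn : 0 < n) (b c : ℂ)
    (f : MvPolynomial (Fin 2) ℂ)
    (hf : f = X 1 ^ 3 + C b * X 0 ^ (2 * n) * X 1 + C c * X 0 ^ (3 * n))
    (hsf : Squarefree f) :
    ∀ d : MvPolynomial (Fin 2) ℂ,
      d ∣ (C (2 * n * b : ℂ) * X 0 ^ (2 * n - 1) * X 1 + C (3 * n * c : ℂ) * X 0 ^ (3 * n - 1)) →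
      d ∣ (C 3 * X 1 ^ 2 + C b * X 0 ^ (2 * n)) →
      IsUnit d := by
  -- the discriminant is nonzero
  have hdisc : 4 * b ^ 3 + 27 * c ^ 2 ≠ 0 := by
    intro h0
    -- find r with b = -3r², c = 2r³
    obtain ⟨r, hb, hc⟩ : ∃ r : ℂ, b = -3 * r ^ 2 ∧ c = 2 * r ^ 3 := by
      by_cases hb : b = 0
      · refine ⟨0, by simp [hb], ?_⟩
        have hcc : c = 0 := by
          have h2 : c ^ 2 = 0 := by
            rw [hb] at h0; linear_combination h0 / 27
          exact pow_eq_zero_iff (by norm_num) |>.mp h2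
        simp [hcc]
      · refine ⟨-3 * c / (2 * b), ?_, ?_⟩
        · field_simp
          linear_combination h0
        · field_simp
          linear_combination c * h0
    set z : MvPolynomial (Fin 2) ℂ := X 1 - C r * X 0 ^ n with hz
    have hzdvd : z * z ∣ f := by
      refine ⟨X 1 + C (2 * r) * X 0 ^ n, ?_⟩
      rw [hf, hb, hc, hz]
      rw [show 2 * n = n * 2 from mul_comm 2 n, show 3 * n = n * 3 from mul_comm 3 n,
        pow_mul, pow_mul]
      simp only [map_mul, map_neg, map_ofNat, map_pow]
      ring
    have hzunit := hsf z hzdvd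
    have hu : IsUnit (psi2 z) := hzunit.map psi2
    rw [hz] at hu
    simp only [map_sub, map_mul, map_pow, psi2_X0, psi2_X1,
      zero_pow hn.ne', mul_zero, sub_zero] at hu
    exact Polynomial.not_isUnit_X hu
  intro d hA hB
  obtain ⟨k, hk⟩ : ∃ k, n = k + 1 := ⟨n - 1, by omega⟩
  rw [show 2 * n - 1 = 2 * k + 1 from by omega,
    show 3 * n - 1 = 3 * k + 2 from by omega] at hA
  rw [show 2 * n = 2 * k + 2 from by omega] at hB
  have hndisc : ((n : ℂ) * (4 * b ^ 3 + 27 * c ^ 2)) ≠ 0 :=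
    mul_ne_zero (Nat.cast_ne_zero.mpr hn.ne') hdisc
  -- the key divisibility: d divides a constant times a power of X 0
  have key : d ∣ C ((n : ℂ) * (4 * b ^ 3 + 27 * c ^ 2)) * X 0 ^ (4 * k + 3) := by
    have h1 : d ∣ (C 3 * (C (2 * b) * X 1 - C (3 * c) * X 0 ^ (k + 1))) *
        (C (2 * n * b : ℂ) * X 0 ^ (2 * k + 1) * X 1 +
          C (3 * n * c : ℂ) * X 0 ^ (3 * k + 2)) :=
      hA.mul_left _
    have h2 : d ∣ (C (4 * (n : ℂ) * b ^ 2) * X 0 ^ (2 * k + 1)) *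
        (C 3 * X 1 ^ 2 + C b * X 0 ^ (2 * k + 2)) := hB.mul_left _
    have h3 := dvd_sub h2 h1
    convert h3 using 1
    simp only [map_mul, map_add, map_ofNat, map_pow]
    ring
  have key2 : d ∣ X 0 ^ (4 * k + 3) := by
    have h4 : (X 0 : MvPolynomial (Fin 2) ℂ) ^ (4 * k + 3) =
        C ((n : ℂ) * (4 * b ^ 3 + 27 * c ^ 2))⁻¹ *
          (C ((n : ℂ) * (4 * b ^ 3 + 27 * c ^ 2)) * X 0 ^ (4 * k + 3)) := by
      rw [← mul_assoc, ← C_mul, inv_mul_cancel₀ hndisc, C_1, one_mul]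
    rw [h4]
    exact key.mul_left _
  obtain ⟨i, hi, hassoc⟩ := (dvd_prime_pow prime_X0 _).mp key2
  match i with
  | 0 =>
    rw [pow_zero] at hassoc
    exact associated_one_iff_isUnit.mp hassoc
  | (j + 1) =>
    exfalso
    have hXd : (X 0 : MvPolynomial (Fin 2) ℂ) ∣ d :=
      dvd_trans (dvd_pow_self _ (Nat.succ_ne_zero j)) hassoc.symm.dvd
    have hXB : (X 0 : MvPolynomial (Fin 2) ℂ) ∣ C 3 * X 1 ^ 2 + C b * X 0 ^ (2 * k + 2) :=
      hXd.trans hB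
    have hdvd0 := map_dvd psi2 hXB
    simp only [AlgHom.toRingHom_eq_coe, RingHom.coe_coe, map_add, map_mul, map_pow,
      psi2_X0, psi2_X1, map_ofNat] at hdvd0
    rw [zero_pow (by omega : 2 * k + 2 ≠ 0), mul_zero, add_zero, zero_dvd_iff] at hdvd0
    have h3 : ((3 : Polynomial ℂ) * Polynomial.X ^ 2).coeff 2 = 3 := by
      simp
    rw [hdvd0] at h3
    simp at h3
end

section
/- Let f_{3n} = y³ + b x^{2n} y + c x^{3n} with bc ≠ 0, and suppose g_k = a x^{k-n} y + β x^k (k ≥ n) is not a multiple of g = 2by + 3cx^n. Then for every m with 3n ≤ m ≤ 4n-2, the vector space P(m) of (1,n)-quasihomogeneous polynomials of degree m is spanned by P(m-2n)·f_{3n,y} + P(m-3n+1)·f_{3n,x} + P(m-k)·g_k, where P(j) denotes the span of monomials x^iy^l with i + nl = j. -/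
open MvPolynomial

/-- `P(j)`: the span of the monomials `xⁱyˡ` with `i + n·l = j`. -/
noncomputable def quasiSpan (n j : ℕ) : Submodule ℂ (MvPolynomial (Fin 2) ℂ) :=
  Submodule.span ℂ {f | ∃ i l : ℕ, i + n * l = j ∧ f = X 0 ^ i * X 1 ^ l}

lemma mem_quasiSpan (n j i l : ℕ) (h : i + n * l = j) (γ : ℂ) :
    C γ * (X 0 ^ i * X 1 ^ l) ∈ quasiSpan n j := by
  rw [← smul_eq_C_mul]
  exact Submodule.smul_mem _ _ (Submodule.subset_span ⟨i, l, h, rfl⟩)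

/-- Let `f₃ₙ = y³ + b x²ⁿy + c x³ⁿ` with `bc ≠ 0` and let
`g_k = a x^{k-n}y + β x^k` (with `n ≤ k < 3n - 1`) not be a multiple of
`g = 2by + 3cxⁿ`. Then for every `3n ≤ m ≤ 4n - 2`, the space `P(m)` is spanned by
`P(m-2n)·f₃ₙ,ᵧ + P(m-3n+1)·f₃ₙ,ₓ + P(m-k)·g_k`. -/
theorem quasiSpan_spanned (n k : ℕ) (hn : 0 < n) (hk₁ : n ≤ k) (hk₂ : k < 3 * n - 1)
    (a b c β : ℂ) (hbc : b * c ≠ 0)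
    (fy fx gk g : MvPolynomial (Fin 2) ℂ)
    (hfy : fy = C 3 * X 1 ^ 2 + C b * X 0 ^ (2 * n))
    (hfx : fx = C (2 * n * b : ℂ) * X 0 ^ (2 * n - 1) * X 1 +
        C (3 * n * c : ℂ) * X 0 ^ (3 * n - 1))
    (hg : g = C (2 * b) * X 1 + C (3 * c) * X 0 ^ n)
    (hgk : gk = C a * X 0 ^ (k - n) * X 1 + C β * X 0 ^ k)
    (hnd : ¬ g ∣ gk) :
    ∀ m : ℕ, 3 * n ≤ m → m ≤ 4 * n - 2 →
      ∀ h ∈ quasiSpan n m,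
        ∃ p ∈ quasiSpan n (m - 2 * n), ∃ q ∈ quasiSpan n (m - (3 * n - 1)),
          ∃ r ∈ quasiSpan n (m - k), h = p * fy + q * fx + r * gk := by
  have hb : b ≠ 0 := left_ne_zero_of_mul hbc
  have hc : c ≠ 0 := right_ne_zero_of_mul hbc
  obtain ⟨s, rfl⟩ : ∃ s, n = s + 1 := ⟨n - 1, by omega⟩
  obtain ⟨t, rfl⟩ : ∃ t, k = s + 1 + t := ⟨k - (s + 1), by omega⟩
  have ht : t ≤ 2 * s := by omega
  have hΔ : 2 * b * β - 3 * a * c ≠ 0 := by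
    intro h0
    apply hnd
    refine ⟨C (a / (2 * b)) * X 0 ^ t, ?_⟩
    have Ca : (C a : MvPolynomial (Fin 2) ℂ) = C (2 * b) * C (a / (2 * b)) := by
      rw [← C_mul]; congr 1; field_simp
    have Cβ : (C β : MvPolynomial (Fin 2) ℂ) = C (3 * c) * C (a / (2 * b)) := by
      rw [← C_mul]; congr 1; field_simp; linear_combination h0
    rw [hgk, hg, show s + 1 + t - (s + 1) = t from by omega,
      show s + 1 + t = t + (s + 1) from by omega, pow_add, Ca, Cβ]
    ring
  intro m hm1 hm2 h hh
  obtain ⟨j, rfl⟩ : ∃ j, m = 3 * s + 3 + j := ⟨m - (3 * s + 3), by omega⟩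
  have hj : j + 1 ≤ s := by omega
  obtain ⟨u, hu⟩ : ∃ u, u + t = 2 * s + 2 + j := ⟨2 * s + 2 + j - t, by omega⟩
  set D : ℂ := ((s : ℂ) + 1) * (2 * b * β - 3 * a * c) with hD_def
  have hs1 : ((s : ℂ) + 1) ≠ 0 := Nat.cast_add_one_ne_zero s
  have hD : D ≠ 0 := mul_ne_zero hs1 hΔ
  have hD3 : (3 : ℂ) * D ≠ 0 := mul_ne_zero three_ne_zero hD
  have Eut : (X 0 : MvPolynomial (Fin 2) ℂ) ^ u * X 0 ^ t = X 0 ^ (2 * s + 2 + j) := by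
    rw [← pow_add, hu]
  have Euk : (X 0 : MvPolynomial (Fin 2) ℂ) ^ u * X 0 ^ (s + 1 + t) = X 0 ^ (3 * s + 3 + j) := by
    rw [← pow_add]; congr 1; omega
  unfold quasiSpan at hh
  induction hh using Submodule.span_induction with
  | zero =>
    exact ⟨0, Submodule.zero_mem _, 0, Submodule.zero_mem _, 0, Submodule.zero_mem _, by ring⟩
  | add x y hx hy ihx ihy =>
    obtain ⟨p1, hp1, q1, hq1, r1, hr1, e1⟩ := ihx
    obtain ⟨p2, hp2, q2, hq2, r2, hr2, e2⟩ := ihy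
    exact ⟨p1 + p2, add_mem hp1 hp2, q1 + q2, add_mem hq1 hq2, r1 + r2, add_mem hr1 hr2,
      by rw [e1, e2]; ring⟩
  | smul cc x hx ih =>
    obtain ⟨p1, hp1, q1, hq1, r1, hr1, e1⟩ := ih
    exact ⟨cc • p1, Submodule.smul_mem _ _ hp1, cc • q1, Submodule.smul_mem _ _ hq1,
      cc • r1, Submodule.smul_mem _ _ hr1,
      by rw [e1, smul_add, smul_add, smul_mul_assoc, smul_mul_assoc, smul_mul_assoc]⟩
  | mem x hx =>
    obtain ⟨i, l, hil, rfl⟩ := hx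
    rcases l with _ | _ | _ | _ | l
    · -- l = 0
      obtain rfl : i = 3 * s + 3 + j := by omega
      have key : C D * ((X 0 : MvPolynomial (Fin 2) ℂ) ^ (3 * s + 3 + j) * X 1 ^ 0) =
          (C (-a) * ((X 0 : MvPolynomial (Fin 2) ℂ) ^ (j + 1) * X 1 ^ 0)) * fx
          + (C (2 * ((s : ℂ) + 1) * b) * ((X 0 : MvPolynomial (Fin 2) ℂ) ^ u * X 1 ^ 0)) * gk := by
        rw [hfx, hgk, hD_def,
          show 2 * (s + 1) - 1 = 2 * s + 1 from by omega,
          show 3 * (s + 1) - 1 = 3 * s + 2 from by omega,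
          show s + 1 + t - (s + 1) = t from by omega]
        simp only [Nat.cast_add, Nat.cast_mul, Nat.cast_ofNat, Nat.cast_one, map_mul, map_add,
          map_sub, map_neg, map_ofNat, map_one, pow_zero, mul_one]
        linear_combination (-2 * (C ((s : ℂ)) + 1) * C b * C a * X 1) * Eut
          + (-2 * (C ((s : ℂ)) + 1) * C b * C β) * Euk
      refine ⟨0, Submodule.zero_mem _,
        C (D⁻¹ * (-a)) * (X 0 ^ (j + 1) * X 1 ^ 0), mem_quasiSpan _ _ _ _ (by omega) _,
        C (D⁻¹ * (2 * ((s : ℂ) + 1) * b)) * (X 0 ^ u * X 1 ^ 0),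
          mem_quasiSpan _ _ _ _ (by omega) _, ?_⟩
      have expand : (X 0 : MvPolynomial (Fin 2) ℂ) ^ (3 * s + 3 + j) * X 1 ^ 0
          = C D⁻¹ * (C D * ((X 0 : MvPolynomial (Fin 2) ℂ) ^ (3 * s + 3 + j) * X 1 ^ 0)) := by
        rw [← mul_assoc, ← C_mul, inv_mul_cancel₀ hD, C_1, one_mul]
      rw [expand, key]
      simp only [C_mul]
      ring
    · -- l = 1
      obtain rfl : i = 2 * s + 2 + j := by omega
      have key : C D * ((X 0 : MvPolynomial (Fin 2) ℂ) ^ (2 * s + 2 + j) * X 1 ^ 1) =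
          (C β * ((X 0 : MvPolynomial (Fin 2) ℂ) ^ (j + 1) * X 1 ^ 0)) * fx
          + (C (-(3 * ((s : ℂ) + 1) * c)) * ((X 0 : MvPolynomial (Fin 2) ℂ) ^ u * X 1 ^ 0)) * gk := by
        rw [hfx, hgk, hD_def,
          show 2 * (s + 1) - 1 = 2 * s + 1 from by omega,
          show 3 * (s + 1) - 1 = 3 * s + 2 from by omega,
          show s + 1 + t - (s + 1) = t from by omega]
        simp only [Nat.cast_add, Nat.cast_mul, Nat.cast_ofNat, Nat.cast_one, map_mul, map_add,
          map_sub, map_neg, map_ofNat, map_one, pow_zero, mul_one]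
        linear_combination (3 * (C ((s : ℂ)) + 1) * C c * C a * X 1) * Eut
          + (3 * (C ((s : ℂ)) + 1) * C c * C β) * Euk
      refine ⟨0, Submodule.zero_mem _,
        C (D⁻¹ * β) * (X 0 ^ (j + 1) * X 1 ^ 0), mem_quasiSpan _ _ _ _ (by omega) _,
        C (D⁻¹ * (-(3 * ((s : ℂ) + 1) * c))) * (X 0 ^ u * X 1 ^ 0),
          mem_quasiSpan _ _ _ _ (by omega) _, ?_⟩
      have expand : (X 0 : MvPolynomial (Fin 2) ℂ) ^ (2 * s + 2 + j) * X 1 ^ 1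
          = C D⁻¹ * (C D * ((X 0 : MvPolynomial (Fin 2) ℂ) ^ (2 * s + 2 + j) * X 1 ^ 1)) := by
        rw [← mul_assoc, ← C_mul, inv_mul_cancel₀ hD, C_1, one_mul]
      rw [expand, key]
      simp only [C_mul]
      ring
    · -- l = 2
      obtain rfl : i = s + 1 + j := by omega
      have key : C (3 * D) * ((X 0 : MvPolynomial (Fin 2) ℂ) ^ (s + 1 + j) * X 1 ^ 2) =
          (C D * ((X 0 : MvPolynomial (Fin 2) ℂ) ^ (s + 1 + j) * X 1 ^ 0)) * fy
          + (C (b * a) * ((X 0 : MvPolynomial (Fin 2) ℂ) ^ (j + 1) * X 1 ^ 0)) * fx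
          + (C (-(2 * ((s : ℂ) + 1) * b * b)) * ((X 0 : MvPolynomial (Fin 2) ℂ) ^ u * X 1 ^ 0)) * gk := by
        rw [hfy, hfx, hgk, hD_def,
          show 2 * (s + 1) - 1 = 2 * s + 1 from by omega,
          show 3 * (s + 1) - 1 = 3 * s + 2 from by omega,
          show s + 1 + t - (s + 1) = t from by omega]
        simp only [Nat.cast_add, Nat.cast_mul, Nat.cast_ofNat, Nat.cast_one, map_mul, map_add,
          map_sub, map_neg, map_ofNat, map_one, pow_zero, mul_one]
        linear_combination (2 * (C ((s : ℂ)) + 1) * C b * C b * C a * X 1) * Eut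
          + (2 * (C ((s : ℂ)) + 1) * C b * C b * C β) * Euk
      refine ⟨C ((3 * D)⁻¹ * D) * (X 0 ^ (s + 1 + j) * X 1 ^ 0),
          mem_quasiSpan _ _ _ _ (by omega) _,
        C ((3 * D)⁻¹ * (b * a)) * (X 0 ^ (j + 1) * X 1 ^ 0), mem_quasiSpan _ _ _ _ (by omega) _,
        C ((3 * D)⁻¹ * (-(2 * ((s : ℂ) + 1) * b * b))) * (X 0 ^ u * X 1 ^ 0),
          mem_quasiSpan _ _ _ _ (by omega) _, ?_⟩
      have expand : (X 0 : MvPolynomial (Fin 2) ℂ) ^ (s + 1 + j) * X 1 ^ 2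
          = C (3 * D)⁻¹ * (C (3 * D) * ((X 0 : MvPolynomial (Fin 2) ℂ) ^ (s + 1 + j) * X 1 ^ 2)) := by
        rw [← mul_assoc, ← C_mul, inv_mul_cancel₀ hD3, C_1, one_mul]
      rw [expand, key]
      simp only [C_mul]
      ring
    · -- l = 3
      have hij : i = j := by omega
      subst i
      have key : C (3 * D) * ((X 0 : MvPolynomial (Fin 2) ℂ) ^ j * X 1 ^ 3) =
          (C D * ((X 0 : MvPolynomial (Fin 2) ℂ) ^ j * X 1 ^ 1)) * fy
          + (C (-(b * β)) * ((X 0 : MvPolynomial (Fin 2) ℂ) ^ (j + 1) * X 1 ^ 0)) * fx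
          + (C (3 * ((s : ℂ) + 1) * c * b) * ((X 0 : MvPolynomial (Fin 2) ℂ) ^ u * X 1 ^ 0)) * gk := by
        rw [hfy, hfx, hgk, hD_def,
          show 2 * (s + 1) - 1 = 2 * s + 1 from by omega,
          show 3 * (s + 1) - 1 = 3 * s + 2 from by omega,
          show s + 1 + t - (s + 1) = t from by omega]
        simp only [Nat.cast_add, Nat.cast_mul, Nat.cast_ofNat, Nat.cast_one, map_mul, map_add,
          map_sub, map_neg, map_ofNat, map_one, pow_zero, mul_one]
        linear_combination (-3 * (C ((s : ℂ)) + 1) * C b * C c * C a * X 1) * Eut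
          + (-3 * (C ((s : ℂ)) + 1) * C b * C c * C β) * Euk
      refine ⟨C ((3 * D)⁻¹ * D) * (X 0 ^ j * X 1 ^ 1), mem_quasiSpan _ _ _ _ (by omega) _,
        C ((3 * D)⁻¹ * (-(b * β))) * (X 0 ^ (j + 1) * X 1 ^ 0),
          mem_quasiSpan _ _ _ _ (by omega) _,
        C ((3 * D)⁻¹ * (3 * ((s : ℂ) + 1) * c * b)) * (X 0 ^ u * X 1 ^ 0),
          mem_quasiSpan _ _ _ _ (by omega) _, ?_⟩
      have expand : (X 0 : MvPolynomial (Fin 2) ℂ) ^ j * X 1 ^ 3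
          = C (3 * D)⁻¹ * (C (3 * D) * ((X 0 : MvPolynomial (Fin 2) ℂ) ^ j * X 1 ^ 3)) := by
        rw [← mul_assoc, ← C_mul, inv_mul_cancel₀ hD3, C_1, one_mul]
      rw [expand, key]
      simp only [C_mul]
      ring
    · -- l ≥ 4 : impossible
      exfalso
      have h1 : (s + 1) * (l + 4) ≤ 3 * s + 3 + j := by
        rw [← hil]; exact Nat.le_add_left _ _
      have h2 : (s + 1) * 4 ≤ (s + 1) * (l + 4) := Nat.mul_le_mul_left _ (by omega)
      have h3 := le_trans h2 h1
      omega
end
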